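/- Assume w_min ≤ w_max, where w_min = (T−R)/(R−S) and w_max = (P−S)/(T−P). If w < w_min then (D,D) is the unique pure-strategy Nash equilibrium of the subjective game; if w > w_max then (C,C) is the unique pure-strategy Nash equilibrium; and if w_min ≤ w ≤ w_max then both (C,C) and (D,D) are pure-strategy Nash equilibria. -/
import Mathlib


/-- Pure strategies in the Prisoner's Dilemma. -/
inductive Strategy : Type
  | C : Strategy
  | D : Strategy
deriving DecidableEq

open Strategy

/-- Objective payoff of the row player when she plays `s` against `t`:
`R` at (C,C), `P` at (D,D), `S` for the cooperator and `T` for the defector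
at an asymmetric profile. -/
def payoff (T R P S : ℝ) : Strategy → Strategy → ℝ
  | C, C => R
  | C, D => S
  | D, C => T
  | D, D => P

/-- Subjective utility of a player who plays `s` against `t`:
`u'_i = a·u_i + b·u_j`. -/
def subj (T R P S a b : ℝ) (s t : Strategy) : ℝ :=
  a * payoff T R P S s t + b * payoff T R P S t s

/-- `(s, t)` is a pure-strategy Nash equilibrium of the subjective game:
no player can strictly increase her subjective utility by a unilateral deviation. -/
def IsNash (T R P S a b : ℝ) (s t : Strategy) : Prop :=
  (∀ s' : Strategy, subj T R P S a b s' t ≤ subj T R P S a b s t) ∧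
  (∀ t' : Strategy, subj T R P S a b t' s ≤ subj T R P S a b t s)


lemma forall_strategy {p : Strategy → Prop} : (∀ s, p s) ↔ p C ∧ p D :=
  ⟨fun h => ⟨h C, h D⟩, fun ⟨h1, h2⟩ s => by cases s <;> assumption⟩

/-- assume `w_min ≤ w_max`.  If `w < w_min` then (D,D) is the unique
pure-strategy Nash equilibrium; if `w > w_max` then (C,C) is the unique one; and
if `w_min ≤ w ≤ w_max` then both (C,C) and (D,D) are Nash equilibria. -/
theorem three_phases (T R P S a b : ℝ)
    (hTR : T > R) (hRP : R > P) (hPS : P > S)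
    (ha : a > 0) (hb : b ≥ 0)
    (hband : (T - R) / (R - S) ≤ (P - S) / (T - P)) :
    (b / a < (T - R) / (R - S) →
      ∀ s t : Strategy, IsNash T R P S a b s t ↔ (s = Strategy.D ∧ t = Strategy.D)) ∧
    (b / a > (P - S) / (T - P) →
      ∀ s t : Strategy, IsNash T R P S a b s t ↔ (s = Strategy.C ∧ t = Strategy.C)) ∧
    ((T - R) / (R - S) ≤ b / a ∧ b / a ≤ (P - S) / (T - P) →
      IsNash T R P S a b Strategy.C Strategy.C ∧
      IsNash T R P S a b Strategy.D Strategy.D) := by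
  have hRS : (0:ℝ) < R - S := by linarith
  have hTP : (0:ℝ) < T - P := by linarith
  refine ⟨?_, ?_, ?_⟩
  · intro hw s t
    have h1 : b * (R - S) < (T - R) * a := (div_lt_div_iff₀ ha hRS).mp hw
    have hw2 : b / a < (P - S) / (T - P) := lt_of_lt_of_le hw hband
    have h2 : b * (T - P) < (P - S) * a := (div_lt_div_iff₀ ha hTP).mp hw2
    cases s <;> cases t <;>
      simp only [IsNash, forall_strategy, subj, payoff, reduceCtorEq, and_self,
        iff_false, iff_true, and_true, true_and, not_and, not_forall, le_refl] <;>
      first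
      | (rintro ⟨⟨hx1, hx2⟩, hy1, hy2⟩; nlinarith)
      | ((repeat' constructor) <;> intros <;> nlinarith)
  · intro hw s t
    have h2 : (P - S) * a < b * (T - P) := (div_lt_div_iff₀ hTP ha).mp hw
    have hw2 : (T - R) / (R - S) < b / a := lt_of_le_of_lt hband hw
    have h1 : (T - R) * a < b * (R - S) := (div_lt_div_iff₀ hRS ha).mp hw2
    cases s <;> cases t <;>
      simp only [IsNash, forall_strategy, subj, payoff, reduceCtorEq, and_self,
        iff_false, iff_true, and_true, true_and, not_and, not_forall, le_refl] <;>
      first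
      | (rintro ⟨⟨hx1, hx2⟩, hy1, hy2⟩; nlinarith)
      | ((repeat' constructor) <;> intros <;> nlinarith)
  · rintro ⟨hw1, hw2⟩
    have h1 : (T - R) * a ≤ b * (R - S) := (div_le_div_iff₀ hRS ha).mp hw1
    have h2 : b * (T - P) ≤ (P - S) * a := (div_le_div_iff₀ ha hTP).mp hw2
    constructor <;>
      simp only [IsNash, forall_strategy, subj, payoff] <;>
      refine ⟨⟨?_, ?_⟩, ?_, ?_⟩ <;> nlinarith
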